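/- Let ε > 0. For any measurable controls ε_x(t), ε_y(t) with √(ε_x(t)² + ε_y(t)²) ≤ ε, let (x(t), y(t), z(t)) solve ẋ = -y + ε_y(t)z, ẏ = x - ε_x(t)z, ż = -ε_y(t)x + ε_x(t)y with initial condition (0,0,1). If p₀ ∈ (0,1) and t ∈ [0, arccos(1-2p₀)/ε], then (1 - z(t))/2 ≤ p₀. -/

import Mathlib

set_option maxHeartbeats 800000

open Real

/-- Theorem 1 (Bloch form): under `H(t) = I_z + ε_x(t)I_x + ε_y(t)I_y` with
`√(ε_x² + ε_y²) ≤ ε`, starting from Bloch vector `(0,0,1)`, the failure probability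
`(1 - z(t))/2` is at most `p₀` on `[0, arccos(1-2p₀)/ε]`. -/
theorem sliding_mode_theorem_one (ε p₀ : ℝ) (hε : 0 < ε) (hp₀ : p₀ ∈ Set.Ioo (0:ℝ) 1)
    (ux uy : ℝ → ℝ) (hux : Measurable ux) (huy : Measurable uy)
    (hbound : ∀ t, Real.sqrt (ux t ^ 2 + uy t ^ 2) ≤ ε)
    (x y z : ℝ → ℝ)
    (hx : ∀ t, HasDerivAt x (-(y t) + uy t * z t) t)
    (hy : ∀ t, HasDerivAt y (x t - ux t * z t) t)
    (hz : ∀ t, HasDerivAt z (-(uy t) * x t + ux t * y t) t)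
    (hx0 : x 0 = 0) (hy0 : y 0 = 0) (hz0 : z 0 = 1) :
    ∀ t ∈ Set.Icc 0 (Real.arccos (1 - 2 * p₀) / ε), (1 - z t) / 2 ≤ p₀ := by
  obtain ⟨hp0, hp1⟩ := hp₀
  set A := Real.arccos (1 - 2 * p₀) with hA
  set T := A / ε with hT
  have hA0 : 0 ≤ A := Real.arccos_nonneg _
  have hAπ : A < π := by
    refine lt_of_le_of_ne (Real.arccos_le_pi _) ?_
    rw [hA, Ne, Real.arccos_eq_pi]
    intro h; linarith
  have hT0 : 0 ≤ T := div_nonneg hA0 hε.le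
  have hεT : ε * T = A := by rw [hT]; field_simp
  -- sphere invariant
  have hN : ∀ t, x t ^ 2 + y t ^ 2 + z t ^ 2 = 1 := by
    have hconst : ∀ t, x t ^ 2 + y t ^ 2 + z t ^ 2 = x 0 ^ 2 + y 0 ^ 2 + z 0 ^ 2 := by
      have hd : ∀ t, HasDerivAt (fun s => x s ^ 2 + y s ^ 2 + z s ^ 2) 0 t := by
        intro t
        have h1 := ((hx t).pow 2).add ((hy t).pow 2) |>.add ((hz t).pow 2)
        convert h1 using 1
        all_goals first | rfl | ring
      have := is_const_of_deriv_eq_zero (f := fun s => x s ^ 2 + y s ^ 2 + z s ^ 2)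
        (fun t => (hd t).differentiableAt) (fun t => (hd t).deriv)
      intro t; exact this t 0
    intro t
    rw [hconst t, hx0, hy0, hz0]; norm_num
  have hu2 : ∀ t, ux t ^ 2 + uy t ^ 2 ≤ ε ^ 2 := by
    intro t
    have h1 := hbound t
    have h2 : (0:ℝ) ≤ ux t ^ 2 + uy t ^ 2 := by positivity
    nlinarith [Real.sq_sqrt h2, Real.sqrt_nonneg (ux t ^ 2 + uy t ^ 2), hε.le]
  -- key bound: z t ≥ cos (ε t) on [0, T]
  have key : ∀ t ∈ Set.Icc (0:ℝ) T, Real.cos (ε * t) ≤ z t := by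
    intro t ht
    obtain ⟨ht0, htT⟩ := ht
    set δ₀ : ℝ := min 1 ((π - A) / (ε + T + 1)) with hδ₀
    have hδ₀pos : 0 < δ₀ := by
      apply lt_min one_pos
      apply div_pos (by linarith) (by linarith)
    have hev : ∀ᶠ δ in nhdsWithin (0:ℝ) (Set.Ioi 0),
        Real.cos ((ε + δ) * (t + δ)) ≤ z t := by
      filter_upwards [Ioo_mem_nhdsGT_of_mem (Set.left_mem_Ico.2 hδ₀pos)] with δ hδ
      obtain ⟨hδ0, hδlt⟩ := hδ
      set c := ε + δ with hc
      have hc0 : 0 < c := by positivity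
      have hcTπ : c * (T + δ) < π := by
        have hδ1 : δ ≤ 1 := le_of_lt (lt_of_lt_of_le hδlt (min_le_left _ _))
        have hδ2 : δ < (π - A) / (ε + T + 1) := lt_of_lt_of_le hδlt (min_le_right _ _)
        have : δ * (ε + T + 1) < π - A := by
          rw [← lt_div_iff₀ (by linarith)]
          exact hδ2
        have hexp : c * (T + δ) = ε * T + δ * (ε + T + δ) := by rw [hc]; ring
        rw [hexp, hεT]
        nlinarith
      -- comparison theorem
      have comp : ∀ ⦃s⦄, s ∈ Set.Icc (0:ℝ) T → -(z s) ≤ -Real.cos (c * (s + δ)) := by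
        apply image_le_of_deriv_right_lt_deriv_boundary
          (f := fun s => -(z s))
          (f' := fun s => uy s * x s - ux s * y s)
          (B := fun s => -Real.cos (c * (s + δ)))
          (B' := fun s => c * Real.sin (c * (s + δ)))
        · have hzdiff : Differentiable ℝ z := fun s => (hz s).differentiableAt
          exact hzdiff.continuous.neg.continuousOn
        · intro s _
          have := ((hz s).neg)
          have h2 : (-(-(uy s) * x s + ux s * y s)) = uy s * x s - ux s * y s := by ring
          rw [h2] at this
          exact this.hasDerivWithinAt
        · simp only [hz0]
          have : Real.cos (c * (0 + δ)) ≤ 1 := Real.cos_le_one _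
          linarith
        · intro s
          have h1 : HasDerivAt (fun s : ℝ => c * (s + δ)) c s := by
            simpa using ((hasDerivAt_id s).add_const δ).const_mul c
          have h2 := (Real.hasDerivAt_cos (c * (s + δ))).comp s h1
          have h3 := h2.neg
          convert h3 using 1
          all_goals first | rfl | ring
        · intro s hs hcontact
          set θ := c * (s + δ) with hθ
          have hθ0 : 0 < θ := by
            have : 0 < s + δ := by have := hs.1; linarith
            positivity
          have hθπ : θ < π := by
            have hsT : s < T := hs.2
            have : θ < c * (T + δ) := by
              apply mul_lt_mul_of_pos_left _ hc0
              linarith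
            linarith
          have hsin : 0 < Real.sin θ := Real.sin_pos_of_pos_of_lt_pi hθ0 hθπ
          have hzc : z s = Real.cos θ := by
            have : -(z s) = -Real.cos θ := hcontact
            linarith
          have hxy : x s ^ 2 + y s ^ 2 = Real.sin θ ^ 2 := by
            have h1 := hN s
            have h2 := Real.sin_sq_add_cos_sq θ
            rw [hzc] at h1
            nlinarith
          have hCS : (uy s * x s - ux s * y s) ^ 2 ≤ (ε * Real.sin θ) ^ 2 := by
            have h1 := hu2 s
            have h2 : (uy s * x s - ux s * y s) ^ 2 ≤
                (ux s ^ 2 + uy s ^ 2) * (x s ^ 2 + y s ^ 2) := by nlinarith [sq_nonneg (ux s * x s + uy s * y s)]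
            have h3 : (0:ℝ) ≤ x s ^ 2 + y s ^ 2 := by positivity
            calc (uy s * x s - ux s * y s) ^ 2
                ≤ (ux s ^ 2 + uy s ^ 2) * (x s ^ 2 + y s ^ 2) := h2
              _ ≤ ε ^ 2 * (x s ^ 2 + y s ^ 2) := by nlinarith
              _ = (ε * Real.sin θ) ^ 2 := by rw [hxy]; ring
          have hεsin : 0 ≤ ε * Real.sin θ := by positivity
          have hle : uy s * x s - ux s * y s ≤ ε * Real.sin θ := by nlinarith
          have : ε * Real.sin θ < c * Real.sin θ := by
            apply mul_lt_mul_of_pos_right _ hsin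
            rw [hc]; linarith
          linarith
      have := comp ⟨ht0, htT⟩
      linarith
    have htend : Filter.Tendsto (fun δ : ℝ => Real.cos ((ε + δ) * (t + δ)))
        (nhdsWithin (0:ℝ) (Set.Ioi 0)) (nhds (Real.cos (ε * t))) := by
      have hcont : Continuous (fun δ : ℝ => Real.cos ((ε + δ) * (t + δ))) := by
        continuity
      have := hcont.tendsto 0
      simp only [add_zero] at this
      exact this.mono_left nhdsWithin_le_nhds
    exact le_of_tendsto htend hev
  -- conclude
  intro t ht
  have h1 := key t ht
  have h2 : Real.cos A ≤ Real.cos (ε * t) := by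
    apply Real.cos_le_cos_of_nonneg_of_le_pi (mul_nonneg hε.le ht.1) (le_of_lt hAπ)
    calc ε * t ≤ ε * T := by
          apply mul_le_mul_of_nonneg_left ht.2 hε.le
      _ = A := hεT
  have h3 : Real.cos A = 1 - 2 * p₀ := Real.cos_arccos (by linarith) (by linarith)
  rw [h3] at h2
  linarith
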